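/- Let M be a compact metric space with a finite good covering 𝒰 = {U_1,…,U_N}, fix L > 6, and let σ be a k-simplex of the nerve 𝒩_𝒰, realized as a geometric simplex in |𝒩_𝒰| ⊆ ℝ^N, with U_σ = ⋂_{j∈σ} U_j. Then there exists a Lipschitz strong deformation retraction of the product metric space σ × K(U_σ) onto (σ × (U_σ × {0})) ∪ (∂σ × K(U_σ)), where ∂σ is the boundary of the simplex σ and U_σ × {0} ⊆ K(U_σ) is the base of the cone. -/

import Mathlib

open Metric Set

/-- The cone distance on `M × [0,L]` (representatives of the cone
`K(M) = M × [0,L] / (M × {L})`). Two representatives are identified in the cone iff their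
cone distance is `0`. -/
noncomputable def coneDist {M : Type*} [PseudoMetricSpace M] (L : ℝ) (c c' : M × ℝ) : ℝ :=
  Real.sqrt ((L - c.2) ^ 2 + (L - c'.2) ^ 2 -
    2 * (L - c.2) * (L - c'.2) * Real.cos (min Real.pi (dist c.1 c'.1)))

/-- The distance on `σ × K(U_σ)`: `d((θ,c),(θ',c'))² = d(θ,θ')² + d_K(c,c')²`, where
`θ, θ'` carry the sup metric of `ℝ^N` (the product metric on `Fin N → ℝ`). -/
noncomputable def prodConeDist {M : Type*} [PseudoMetricSpace M] {N : ℕ} (L : ℝ)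
    (z w : (Fin N → ℝ) × M × ℝ) : ℝ :=
  Real.sqrt (dist z.1 w.1 ^ 2 + coneDist L z.2 w.2 ^ 2)

/-- A subset `V` of a metric space admits a *Lipschitz strong deformation retraction to a
point*. -/
def IsLipSDRToPoint {X : Type*} [MetricSpace X] (V : Set X) : Prop :=
  ∃ (p : V) (F : V × unitInterval → V) (K : NNReal),
    LipschitzWith K F ∧ (∀ x, F (x, 0) = x) ∧ (∀ x, F (x, 1) = p) ∧ (∀ t, F (p, t) = p)

/-- A locally finite open covering is *good*. -/
def IsGoodCovering {X : Type*} [MetricSpace X] {J : Type*} (U : J → Set X) : Prop :=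
  (∀ j, IsOpen (U j)) ∧ (⋃ j, U j) = univ ∧ LocallyFinite U ∧
    (∀ j, IsCompact (closure (U j))) ∧
    ∀ s : Finset J, s.Nonempty → (⋂ j ∈ s, U j).Nonempty → IsLipSDRToPoint (⋂ j ∈ s, U j)

/-- The closed geometric simplex of `|𝒩_𝒰| ⊆ ℝ^N` spanned by the vertices in `σ`. -/
def SimplexSet {N : ℕ} (σ : Finset (Fin N)) : Set (Fin N → ℝ) :=
  {θ | (∀ j, 0 ≤ θ j) ∧ ∑ j, θ j = 1 ∧ ∀ j, θ j ≠ 0 → j ∈ σ}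


set_option maxHeartbeats 10000000

lemma sq_le_one_sub_cos {x : ℝ} (h0 : 0 ≤ x) (hx : x ≤ Real.pi) :
    2 / Real.pi ^ 2 * x ^ 2 ≤ 1 - Real.cos x := by
  have hπ := Real.pi_pos
  have hs : 2 / Real.pi * (x / 2) ≤ Real.sin (x / 2) :=
    Real.mul_le_sin (by linarith) (by linarith)
  have hs0 : (0:ℝ) ≤ 2 / Real.pi * (x / 2) := by positivity
  have hcos : Real.cos x = 2 * Real.cos (x / 2) ^ 2 - 1 := by
    have := Real.cos_two_mul (x / 2)
    rw [show 2 * (x/2) = x by ring] at this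
    linarith
  have hpyth := Real.sin_sq_add_cos_sq (x / 2)
  have hsq : (2 / Real.pi * (x / 2)) ^ 2 ≤ Real.sin (x/2) ^ 2 := by nlinarith
  have hexp : (2 / Real.pi * (x / 2)) ^ 2 = x^2 / Real.pi^2 := by
    field_simp
  rw [hexp] at hsq
  have : Real.pi ^ 2 > 0 := by positivity
  rw [div_le_iff₀ this] at hsq; rw [div_mul_eq_mul_div, div_le_iff₀ this]
  nlinarith

section coneLemmas
variable {M : Type*} [PseudoMetricSpace M] {L : ℝ} {c c' : M × ℝ}

lemma coneDist_nonneg : 0 ≤ coneDist L c c' := Real.sqrt_nonneg _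

lemma coneDist_eq (L : ℝ) (c c' : M × ℝ) : coneDist L c c' =
    Real.sqrt ((c.2 - c'.2)^2 + 2*(L-c.2)*(L-c'.2)*(1 - Real.cos (min Real.pi (dist c.1 c'.1)))) := by
  rw [coneDist]; congr 1; ring

lemma abs_sub_le_coneDist (h : c.2 ≤ L) (h' : c'.2 ≤ L) :
    |c.2 - c'.2| ≤ coneDist L c c' := by
  rw [coneDist_eq]
  have h1 : (0:ℝ) ≤ 2*(L-c.2)*(L-c'.2)*(1 - Real.cos (min Real.pi (dist c.1 c'.1))) := by
    have hc := Real.cos_le_one (min Real.pi (dist c.1 c'.1))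
    have h2 : 0 ≤ L - c.2 := by linarith
    have h3 : 0 ≤ L - c'.2 := by linarith
    exact mul_nonneg (mul_nonneg (mul_nonneg (by norm_num) h2) h3) (by linarith)
  calc |c.2 - c'.2| = Real.sqrt ((c.2 - c'.2)^2) := (Real.sqrt_sq_eq_abs _).symm
    _ ≤ _ := Real.sqrt_le_sqrt (by linarith)

lemma mul_min_le_coneDist (h : c.2 ≤ L) (h' : c'.2 ≤ L) :
    2 / Real.pi * (Real.sqrt ((L - c.2)*(L - c'.2)) * min Real.pi (dist c.1 c'.1))
      ≤ coneDist L c c' := by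
  set α := min Real.pi (dist c.1 c'.1) with hα
  have hα0 : 0 ≤ α := le_min Real.pi_pos.le dist_nonneg
  have hαπ : α ≤ Real.pi := min_le_left _ _
  have h2 : 0 ≤ L - c.2 := by linarith
  have h3 : 0 ≤ L - c'.2 := by linarith
  have hW2 : Real.sqrt ((L - c.2)*(L - c'.2)) ^ 2 = (L - c.2)*(L - c'.2) :=
    Real.sq_sqrt (by positivity)
  have hlow := sq_le_one_sub_cos hα0 hαπ
  have hπ := Real.pi_pos
  rw [coneDist_eq]
  have key : (2 / Real.pi * (Real.sqrt ((L - c.2)*(L - c'.2)) * α)) ^ 2 ≤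
      (c.2 - c'.2)^2 + 2*(L-c.2)*(L-c'.2)*(1 - Real.cos α) := by
    have e1 : (2 / Real.pi * (Real.sqrt ((L - c.2)*(L - c'.2)) * α)) ^ 2
        = (2/Real.pi)^2 * ((L-c.2)*(L-c'.2)) * α^2 := by
      rw [mul_pow, mul_pow, hW2]; ring
    rw [e1]
    have e2 : (2/Real.pi)^2 * ((L-c.2)*(L-c'.2)) * α^2
        = 2*(L-c.2)*(L-c'.2) * (2/Real.pi^2 * α^2) := by
      field_simp
    rw [e2]
    nlinarith [mul_nonneg h2 h3, sq_nonneg (c.2 - c'.2),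
      mul_le_mul_of_nonneg_left hlow (by positivity : (0:ℝ) ≤ 2*(L-c.2)*(L-c'.2))]
  calc 2 / Real.pi * (Real.sqrt ((L - c.2)*(L - c'.2)) * α)
      = Real.sqrt ((2 / Real.pi * (Real.sqrt ((L - c.2)*(L - c'.2)) * α))^2) :=
        (Real.sqrt_sq (by positivity)).symm
    _ ≤ _ := Real.sqrt_le_sqrt key

lemma coneDist_le_add (h : c.2 ≤ L) (h' : c'.2 ≤ L) :
    coneDist L c c' ≤ |c.2 - c'.2| +
      Real.sqrt ((L - c.2)*(L - c'.2)) * min Real.pi (dist c.1 c'.1) := by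
  set α := min Real.pi (dist c.1 c'.1) with hα
  have hα0 : 0 ≤ α := le_min Real.pi_pos.le dist_nonneg
  have h2 : 0 ≤ L - c.2 := by linarith
  have h3 : 0 ≤ L - c'.2 := by linarith
  have hW2 : Real.sqrt ((L - c.2)*(L - c'.2)) ^ 2 = (L - c.2)*(L - c'.2) :=
    Real.sq_sqrt (by positivity)
  have hup : 1 - Real.cos α ≤ α^2/2 := by
    have := Real.one_sub_sq_div_two_le_cos (x := α); linarith
  have hcos1 : Real.cos α ≤ 1 := Real.cos_le_one _
  rw [coneDist_eq]
  have key : (c.2 - c'.2)^2 + 2*(L-c.2)*(L-c'.2)*(1 - Real.cos α) ≤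
      (|c.2 - c'.2| + Real.sqrt ((L - c.2)*(L - c'.2)) * α)^2 := by
    have hW0 : 0 ≤ Real.sqrt ((L - c.2)*(L - c'.2)) := Real.sqrt_nonneg _
    have habs : |c.2 - c'.2|^2 = (c.2-c'.2)^2 := sq_abs _
    nlinarith [mul_nonneg h2 h3, abs_nonneg (c.2 - c'.2),
      mul_nonneg (mul_nonneg (abs_nonneg (c.2-c'.2)) hW0) hα0,
      mul_le_mul_of_nonneg_left hup (by positivity : (0:ℝ) ≤ 2*(L-c.2)*(L-c'.2))]
  calc Real.sqrt ((c.2 - c'.2)^2 + 2*(L-c.2)*(L-c'.2)*(1 - Real.cos α))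
      ≤ Real.sqrt ((|c.2 - c'.2| + Real.sqrt ((L - c.2)*(L - c'.2)) * α)^2) :=
        Real.sqrt_le_sqrt key
    _ = _ := Real.sqrt_sq (by positivity)

lemma coneDist_self (L : ℝ) (c : M × ℝ) : coneDist L c c = 0 := by
  rw [coneDist, dist_self, min_eq_right Real.pi_pos.le, Real.cos_zero]
  rw [show (L - c.2) ^ 2 + (L - c.2) ^ 2 - 2 * (L - c.2) * (L - c.2) * 1 = 0 by ring]
  exact Real.sqrt_zero

end coneLemmas

section prodLemmas
variable {M : Type*} [PseudoMetricSpace M] {N : ℕ} {L : ℝ} {z w : (Fin N → ℝ) × M × ℝ}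

lemma prodConeDist_nonneg : 0 ≤ prodConeDist L z w := Real.sqrt_nonneg _

lemma dist_fst_le_prodConeDist : dist z.1 w.1 ≤ prodConeDist L z w := by
  rw [prodConeDist]
  calc dist z.1 w.1 = Real.sqrt ((dist z.1 w.1)^2) := (Real.sqrt_sq dist_nonneg).symm
    _ ≤ _ := Real.sqrt_le_sqrt (by nlinarith [sq_nonneg (coneDist L z.2 w.2)])

lemma coneDist_le_prodConeDist : coneDist L z.2 w.2 ≤ prodConeDist L z w := by
  rw [prodConeDist]
  calc coneDist L z.2 w.2 = Real.sqrt ((coneDist L z.2 w.2)^2) :=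
        (Real.sqrt_sq coneDist_nonneg).symm
    _ ≤ _ := Real.sqrt_le_sqrt (by nlinarith [sq_nonneg (dist z.1 w.1)])

lemma prodConeDist_le_add : prodConeDist L z w ≤ dist z.1 w.1 + coneDist L z.2 w.2 := by
  rw [prodConeDist]
  have h1 := dist_nonneg (x := z.1) (y := w.1)
  have h2 := coneDist_nonneg (L := L) (c := z.2) (c' := w.2)
  calc Real.sqrt (dist z.1 w.1 ^ 2 + coneDist L z.2 w.2 ^ 2)
      ≤ Real.sqrt ((dist z.1 w.1 + coneDist L z.2 w.2)^2) :=
        Real.sqrt_le_sqrt (by nlinarith)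
    _ = _ := Real.sqrt_sq (by positivity)

lemma prodConeDist_self (L : ℝ) (z : (Fin N → ℝ) × M × ℝ) : prodConeDist L z z = 0 := by
  rw [prodConeDist, dist_self, coneDist_self]
  norm_num

end prodLemmas


private lemma mini_qt {s m t q : ℝ} (hq : q = s*m*t) (hs0 : 0 ≤ s) (hm0 : 0 ≤ m)
    (ht0 : 0 ≤ t) (hsm1 : s*m ≤ 1) : 0 ≤ q ∧ q ≤ t := by
  constructor
  · rw [hq]; positivity
  · rw [hq]; nlinarith [mul_nonneg (by linarith : (0:ℝ) ≤ 1 - s*m) ht0]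

private lemma mini_u1q {L u u1 s m t q : ℝ} (hu1b : u1 ≤ u + 4*L*(s*m))
    (hq : q = s*m*t) (ht2 : L/2 ≤ t) (hsm0 : 0 ≤ s*m) (hL : 0 ≤ L) :
    u1 ≤ u + 8*q := by nlinarith

private lemma mini_sqprod {x y a b E : ℝ} (hx0 : 0 ≤ x) (hy0 : 0 ≤ y)
    (hx : x ≤ a*E) (hy : y ≤ b*E) (hE : 0 ≤ E) (hab : 1 ≤ a*b) :
    x*y ≤ (a*b*E)^2 := by nlinarith [mul_le_mul hx hy hy0 (by nlinarith : (0:ℝ) ≤ a*E)]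

private lemma mini_const1 {cM cΔ L : ℝ} (h1 : 1 ≤ cM) (h2 : 20 ≤ cΔ) (hL : 6 < L) :
    9*cΔ*(1+4*L) ≤ (1+4*L) * (cM+1) * cΔ^2 * 20 := by
  have h3 : 9*cΔ ≤ (cM+1)*cΔ^2*20 := by nlinarith
  have hB : (0:ℝ) ≤ 1+4*L := by linarith
  calc 9*cΔ*(1+4*L) = (1+4*L)*(9*cΔ) := by ring
    _ ≤ (1+4*L)*((cM+1)*cΔ^2*20) := mul_le_mul_of_nonneg_left h3 hB
    _ = (1+4*L)*(cM+1)*cΔ^2*20 := by ring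

private lemma mini_const2 {cM cΔ L : ℝ} (h1 : 1 ≤ cM) (h2 : 20 ≤ cΔ) (hL : 6 < L) :
    (2+8*cΔ)*(1+4*L)*cΔ ≤ (1+4*L) * (cM+1) * cΔ^2 * 20 := by
  have h3 : (2+8*cΔ)*cΔ ≤ (cM+1)*cΔ^2*20 := by nlinarith
  have hB : (0:ℝ) ≤ 1+4*L := by linarith
  calc (2+8*cΔ)*(1+4*L)*cΔ = (1+4*L)*((2+8*cΔ)*cΔ) := by ring
    _ ≤ (1+4*L)*((cM+1)*cΔ^2*20) := mul_le_mul_of_nonneg_left h3 hB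
    _ = (1+4*L)*(cM+1)*cΔ^2*20 := by ring

private lemma mini_ab1 {a b : ℝ} (h2 : 20 ≤ a) (hL : 1 ≤ b) : 1 ≤ a*b := by nlinarith

private lemma u1_le_aux {L u u1 s m t : ℝ} (hL : 6 < L)
    (hu1L : u1 ≤ L) (hu1b : u1 ≤ u + 4*L*(s*m)) (hq : s*m*t < u)
    (ht : t = L - u) (hsm0 : 0 ≤ s*m) (hsm1 : s*m ≤ 1) :
    u1 ≤ (1 + 4*L) * u := by
  rcases le_or_gt t 1 with h | h
  · have hu5 : L - 1 ≤ u := by rw [ht] at h; linarith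
    nlinarith
  · have h1 : s*m < u := by nlinarith
    nlinarith

private lemma phi_bound_asym {L CR cM E n u u' t t' s s' m m' q q' τ τ' u1 u1' β : ℝ}
    (hL : 6 < L) (hCR : 0 ≤ CR) (hcM : 1 ≤ cM) (hn : 1 ≤ n) (hE : 0 ≤ E)
    (hu0 : 0 ≤ u) (ht : t = L - u) (ht0 : 0 ≤ t)
    (hu0' : 0 ≤ u') (ht' : t' = L - u') (ht0' : 0 ≤ t')
    (hs0 : 0 ≤ s) (hs1 : s ≤ 1) (hs0' : 0 ≤ s') (hs1' : s' ≤ 1)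
    (hm0 : 0 ≤ m) (hm1 : m ≤ 1) (hm0' : 0 ≤ m') (hm1' : m' ≤ 1)
    (hq : q = s * m * t) (hq' : q' = s' * m' * t')
    (hτ' : τ' = max 0 (min 1 (q' / max q' u')))
    (hu1a : u ≤ u1) (hu1b : u1 ≤ u + 4*L*(s*m)) (hu1L : u1 ≤ L)
    (hu1a' : u' ≤ u1') (hu1b' : u1' ≤ u' + 4*L*(s'*m')) (hu1L' : u1' ≤ L)
    (hβ0 : 0 ≤ β)
    (hβ2 : β ≤ CR * (1 - τ) + CR * (1 - τ'))
    (hτe : τ = max 0 (min 1 (q / max q u)))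
    (hΔu : |u - u'| ≤ E) (hΔq : |q - q'| ≤ (2*L*n + L + 1) * E)
    (hCq : u ≤ q) (hB' : q' < u') :
    Real.sqrt (u1 * u1') * β ≤ CR * ((1+4*L) * (cM+1) * (2*L*n+L+2)^2 * 20) * E := by
  have hsm1 : s*m ≤ 1 := mul_le_one₀ hs1 hm0 hm1
  have hsm1' : s'*m' ≤ 1 := mul_le_one₀ hs1' hm0' hm1'
  obtain ⟨hq0, hqt⟩ := mini_qt hq hs0 hm0 ht0 hsm1
  obtain ⟨hq0', hqt'⟩ := mini_qt hq' hs0' hm0' ht0' hsm1'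
  have hu1'0 : 0 ≤ u1' := le_trans hu0' hu1a'
  have hu10 : 0 ≤ u1 := le_trans hu0 hu1a
  set cΔ : ℝ := 2*L*n + L + 2 with hcΔ
  have hLn : 6 ≤ L*n := by nlinarith [mul_le_mul_of_nonneg_left hn (by linarith : (0:ℝ) ≤ L)]
  have hcΔ20 : 20 ≤ cΔ := by rw [hcΔ]; linarith
  have hΔ : |u - u'| + |q - q'| ≤ cΔ * E := by
    have h1 : (2*L*n + L + 1) * E ≤ (cΔ - 1) * E := by
      apply mul_le_mul_of_nonneg_right _ hE
      rw [hcΔ]; linarith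
    linarith
  rcases eq_or_lt_of_le hq0 with hq0e | hqpos
  · have hu_eq : u = 0 := le_antisymm (by linarith [hCq, hq0e]) hu0
    have htL : t = L := by rw [ht, hu_eq]; ring
    have hsm : s * m = 0 := by
      rcases mul_eq_zero.mp (by rw [htL] at hq; linarith : (s*m) * L = 0) with h | h
      · exact h
      · exfalso; linarith
    have hu1_eq : u1 = 0 := le_antisymm (by rw [hsm] at hu1b; linarith [hu1b, hu_eq])
      (by linarith [hu1a, hu_eq])
    rw [hu1_eq, zero_mul, Real.sqrt_zero, zero_mul]
    have hcp : (0:ℝ) ≤ (1+4*L) * (cM+1) * cΔ^2 * 20 := by positivity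
    positivity
  · have hτ1 : τ = 1 := by
      rw [hτe, max_eq_left hCq, div_self (ne_of_gt hqpos), min_self, max_eq_right zero_le_one]
    have hu'pos : 0 < u' := lt_of_le_of_lt hq0' hB'
    have hτ'v : τ' = q' / u' := by
      rw [hτ', max_eq_right hB'.le, min_eq_right ((div_le_one hu'pos).mpr hB'.le),
        max_eq_right (div_nonneg hq0' hu'pos.le)]
    have hτ'0 : 0 ≤ τ' := by rw [hτ'v]; positivity
    have hτ'1 : τ' ≤ 1 := by rw [hτ'v]; exact (div_le_one hu'pos).mpr hB'.le
    have hβ : β ≤ CR * (1 - τ') := by rw [hτ1] at hβ2; simpa using hβ2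
    have ht2 : L/2 ≤ t := by linarith
    have hu1q : u1 ≤ u + 8*q := mini_u1q hu1b hq ht2 (mul_nonneg hs0 hm0) (by linarith)
    have key1' : u1' ≤ (1+4*L)*u' :=
      u1_le_aux hL hu1L' hu1b' (by rw [← hq']; exact hB') ht'
        (mul_nonneg hs0' hm0') hsm1'
    have huq'Δ : u' - q' ≤ cΔ * E := by
      have h1 := le_abs_self (u' - u)
      have h2 := le_abs_self (q - q')
      rw [abs_sub_comm u' u] at h1
      linarith
    rcases le_or_gt u' E with hsmall | hbig
    · -- u' ≤ E
      have hqE : q ≤ cΔ * E := by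
        have h2 := le_abs_self (q - q')
        have h1 : (2*L*n + L + 1) * E ≤ (cΔ - 1) * E :=
          mul_le_mul_of_nonneg_right (by rw [hcΔ]; linarith) hE
        linarith
      have hu1E : u1 ≤ 9*(cΔ*E) := by linarith
      have hu1'E : u1' ≤ (1+4*L)*E := by
        have := mul_le_mul_of_nonneg_left hsmall (by linarith : (0:ℝ) ≤ 1+4*L)
        linarith
      have hβCR : β ≤ CR := by
        have : CR * (1 - τ') ≤ CR * 1 := mul_le_mul_of_nonneg_left (by linarith) hCR
        linarith
      have hab : (1:ℝ) ≤ (9*cΔ)*(1+4*L) := mini_ab1 (by linarith) (by linarith)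
      have h1 : u1*u1' ≤ ((9*cΔ)*(1+4*L)*E)^2 :=
        mini_sqprod hu10 hu1'0 (by linarith) hu1'E hE hab
      have hsr : Real.sqrt (u1*u1') ≤ (9*cΔ)*(1+4*L) * E := by
        calc Real.sqrt (u1*u1') ≤ Real.sqrt (((9*cΔ)*(1+4*L)*E)^2) := Real.sqrt_le_sqrt h1
          _ = (9*cΔ)*(1+4*L)*E := Real.sqrt_sq (by positivity)
      have hstep : Real.sqrt (u1 * u1') * β ≤ ((9*cΔ)*(1+4*L)*E) * CR :=
        mul_le_mul hsr hβCR hβ0 (by positivity)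
      have hconst := mini_const1 hcM hcΔ20 hL
      calc Real.sqrt (u1 * u1') * β ≤ ((9*cΔ)*(1+4*L)*E) * CR := hstep
        _ = CR * (9*cΔ*(1+4*L)) * E := by ring
        _ ≤ CR * ((1+4*L) * (cM+1) * cΔ^2 * 20) * E := by
            apply mul_le_mul_of_nonneg_right _ hE
            exact mul_le_mul_of_nonneg_left hconst hCR
    · -- E < u'
      have huu' : u ≤ 2*u' := by
        have := le_abs_self (u - u'); linarith
      have hq2 : q ≤ cΔ*u' := by
        have h2 := le_abs_self (q - q')
        have h1 : (2*L*n + L + 1) * E ≤ (cΔ - 1) * u' :=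
          le_trans (mul_le_mul_of_nonneg_right (by rw [hcΔ]; linarith) hE)
            (mul_le_mul_of_nonneg_left hbig.le (by linarith))
        linarith
      have hu1u' : u1 ≤ (2 + 8*cΔ)*u' := by linarith
      have hab : (1:ℝ) ≤ (2+8*cΔ)*(1+4*L) := mini_ab1 (by linarith) (by linarith)
      have h1 : u1*u1' ≤ ((2+8*cΔ)*(1+4*L)*u')^2 :=
        mini_sqprod hu10 hu1'0 hu1u' key1' hu'pos.le hab
      have hsr : Real.sqrt (u1*u1') ≤ (2+8*cΔ)*(1+4*L) * u' := by
        calc Real.sqrt (u1*u1') ≤ Real.sqrt (((2+8*cΔ)*(1+4*L)*u')^2) := Real.sqrt_le_sqrt h1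
          _ = (2+8*cΔ)*(1+4*L)*u' := Real.sqrt_sq (by positivity)
      have hβu' : β * u' ≤ CR * (cΔ * E) := by
        have e1 : (1 - τ') * u' = u' - q' := by
          rw [hτ'v]; field_simp
        have h2 : β * u' ≤ (CR * (1-τ')) * u' :=
          mul_le_mul_of_nonneg_right hβ hu'pos.le
        have h3 : (CR * (1-τ')) * u' = CR * (u' - q') := by rw [mul_assoc, e1]
        rw [h3] at h2
        exact le_trans h2 (mul_le_mul_of_nonneg_left huq'Δ hCR)
      have hfin : (Real.sqrt (u1 * u1') * β) * u' ≤ ((2+8*cΔ)*(1+4*L) * (CR * (cΔ * E))) * u' := by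
        calc (Real.sqrt (u1 * u1') * β) * u' = Real.sqrt (u1*u1') * (β * u') := by ring
          _ ≤ ((2+8*cΔ)*(1+4*L) * u') * (CR * (cΔ * E)) := by
              apply mul_le_mul hsr hβu' (mul_nonneg hβ0 hu'pos.le) (by positivity)
          _ = ((2+8*cΔ)*(1+4*L) * (CR * (cΔ * E))) * u' := by ring
      have h4 : Real.sqrt (u1 * u1') * β ≤ (2+8*cΔ)*(1+4*L) * (CR * (cΔ * E)) :=
        le_of_mul_le_mul_right hfin (by linarith)
      have hconst := mini_const2 hcM hcΔ20 hL
      calc Real.sqrt (u1 * u1') * β ≤ (2+8*cΔ)*(1+4*L) * (CR * (cΔ * E)) := h4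
        _ = CR * ((2+8*cΔ)*(1+4*L)*cΔ) * E := by ring
        _ ≤ CR * ((1+4*L) * (cM+1) * cΔ^2 * 20) * E := by
            apply mul_le_mul_of_nonneg_right _ hE
            exact mul_le_mul_of_nonneg_left hconst hCR


private lemma mini_cross {q q' u u' : ℝ} (hq0 : 0 ≤ q) (hq0' : 0 ≤ q')
    (hB : q ≤ u) (hB' : q' ≤ u') :
    |q*u' - q'*u| ≤ min u u' * (|u - u'| + |q - q'|) := by
  have h1 : |q*u' - q'*u| ≤ u * (|u - u'| + |q - q'|) := by
    have e : q*u' - q'*u = q*(u' - u) + u*(q - q') := by ring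
    rw [e]
    refine (abs_add_le _ _).trans ?_
    rw [abs_mul, abs_mul]
    have hu0 : 0 ≤ u := le_trans hq0 hB
    rw [abs_of_nonneg hq0, abs_of_nonneg hu0, abs_sub_comm u' u]
    nlinarith [abs_nonneg (u - u'), abs_nonneg (q - q')]
  have h2 : |q*u' - q'*u| ≤ u' * (|u - u'| + |q - q'|) := by
    have e : q*u' - q'*u = q'*(u' - u) + u'*(q - q') := by ring
    rw [e]
    refine (abs_add_le _ _).trans ?_
    rw [abs_mul, abs_mul]
    have hu0' : 0 ≤ u' := le_trans hq0' hB'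
    rw [abs_of_nonneg hq0', abs_of_nonneg hu0', abs_sub_comm u' u]
    nlinarith [abs_nonneg (u - u'), abs_nonneg (q - q')]
  rcases le_total u u' with h | h
  · rw [min_eq_left h]; exact h1
  · rw [min_eq_right h]; exact h2

private lemma mini_min_le_sqrt {u u' : ℝ} (hu : 0 ≤ u) (hu' : 0 ≤ u') :
    min u u' ≤ Real.sqrt (u * u') := by
  rcases le_total u u' with h | h
  · rw [min_eq_left h]
    calc u = Real.sqrt (u^2) := (Real.sqrt_sq hu).symm
      _ ≤ Real.sqrt (u*u') := Real.sqrt_le_sqrt (by nlinarith)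
  · rw [min_eq_right h]
    calc u' = Real.sqrt (u'^2) := (Real.sqrt_sq hu').symm
      _ ≤ Real.sqrt (u*u') := Real.sqrt_le_sqrt (by nlinarith)

private lemma mini_caseB_const {cM cΔ L : ℝ} (h1 : 1 ≤ cM) (h2 : 20 ≤ cΔ) (hL : 6 < L) :
    (1+4*L)*(cM*2 + cΔ) ≤ (1+4*L) * (cM+1) * cΔ^2 * 20 := by
  have hsq : 400 ≤ cΔ^2 := by nlinarith
  have h3 : cM*2 + cΔ ≤ (cM+1)*cΔ^2*20 := by
    nlinarith [mul_le_mul_of_nonneg_left hsq (by linarith : (0:ℝ) ≤ cM)]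
  have hB : (0:ℝ) ≤ 1+4*L := by linarith
  calc (1+4*L)*(cM*2 + cΔ) ≤ (1+4*L)*((cM+1)*cΔ^2*20) := mul_le_mul_of_nonneg_left h3 hB
    _ = (1+4*L)*(cM+1)*cΔ^2*20 := by ring

private lemma phi_bound_B {L CR cM E n u u' t t' s s' m m' q q' τ τ' u1 u1' β α : ℝ}
    (hL : 6 < L) (hCR : 0 ≤ CR) (hcM : 1 ≤ cM) (hn : 1 ≤ n) (hE : 0 ≤ E)
    (hu0 : 0 ≤ u) (ht : t = L - u)
    (hu0' : 0 ≤ u') (ht' : t' = L - u')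
    (hs0 : 0 ≤ s) (hs0' : 0 ≤ s')
    (hm0 : 0 ≤ m) (hm0' : 0 ≤ m')
    (hsm1 : s*m ≤ 1) (hsm1' : s'*m' ≤ 1)
    (hq : q = s * m * t) (hq' : q' = s' * m' * t')
    (hq0 : 0 ≤ q) (hq0' : 0 ≤ q')
    (hτ : τ = max 0 (min 1 (q / max q u))) (hτ' : τ' = max 0 (min 1 (q' / max q' u')))
    (hu1b : u1 ≤ u + 4*L*(s*m)) (hu1L : u1 ≤ L) (hu10 : 0 ≤ u1)
    (hu1b' : u1' ≤ u' + 4*L*(s'*m')) (hu1L' : u1' ≤ L) (hu1'0 : 0 ≤ u1')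
    (hβ0 : 0 ≤ β)
    (hβ1 : β ≤ CR * (cM * α) + CR * |τ - τ'|)
    (hWα : Real.sqrt (u * u') * α ≤ 2 * E)
    (hΔ : |u - u'| + |q - q'| ≤ (2*L*n+L+2) * E)
    (hB : q < u) (hB' : q' < u') :
    Real.sqrt (u1 * u1') * β ≤ CR * ((1+4*L) * (cM+1) * (2*L*n+L+2)^2 * 20) * E := by
  have hu_pos : 0 < u := lt_of_le_of_lt hq0 hB
  have hu'_pos : 0 < u' := lt_of_le_of_lt hq0' hB'
  have hτv : τ = q / u := by
    rw [hτ, max_eq_right hB.le, min_eq_right ((div_le_one hu_pos).mpr hB.le),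
      max_eq_right (div_nonneg hq0 hu_pos.le)]
  have hτ'v : τ' = q' / u' := by
    rw [hτ', max_eq_right hB'.le, min_eq_right ((div_le_one hu'_pos).mpr hB'.le),
      max_eq_right (div_nonneg hq0' hu'_pos.le)]
  set W : ℝ := Real.sqrt (u * u') with hW
  have hW2 : W^2 = u*u' := Real.sq_sqrt (by positivity)
  have hWpos : 0 < W := Real.sqrt_pos.mpr (by positivity)
  have hτΔ : W * |τ - τ'| ≤ |u - u'| + |q - q'| := by
    have hdiff : τ - τ' = (q*u' - q'*u)/(u*u') := by
      rw [hτv, hτ'v]; field_simp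
    have habs : |τ - τ'| = |q*u' - q'*u|/(u*u') := by
      rw [hdiff, abs_div, abs_of_pos (by positivity : (0:ℝ) < u*u')]
    have hXm : |q*u' - q'*u| ≤ W * (|u - u'| + |q - q'|) :=
      le_trans (mini_cross hq0 hq0' hB.le hB'.le)
        (mul_le_mul_of_nonneg_right (mini_min_le_sqrt hu_pos.le hu'_pos.le)
          (by positivity))
    have he : W * |τ - τ'| = |q*u' - q'*u| / W := by
      rw [habs, ← hW2]
      field_simp
    rw [he, div_le_iff₀ hWpos]
    calc |q*u' - q'*u| ≤ W * (|u - u'| + |q - q'|) := hXm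
      _ = (|u - u'| + |q - q'|) * W := by ring
  have key1 : u1 ≤ (1+4*L)*u :=
    u1_le_aux hL hu1L hu1b (by rw [← hq]; exact hB) ht (mul_nonneg hs0 hm0) hsm1
  have key1' : u1' ≤ (1+4*L)*u' :=
    u1_le_aux hL hu1L' hu1b' (by rw [← hq']; exact hB') ht' (mul_nonneg hs0' hm0') hsm1'
  have hsr : Real.sqrt (u1*u1') ≤ (1+4*L) * W := by
    have h0 : u1*u1' ≤ ((1+4*L)*W)^2 := by
      have h01 := mul_le_mul key1 key1' hu1'0 (by positivity : (0:ℝ) ≤ (1+4*L)*u)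
      have : ((1+4*L)*W)^2 = (1+4*L)*u*((1+4*L)*u') := by
        rw [mul_pow, hW2]; ring
      linarith
    calc Real.sqrt (u1*u1') ≤ Real.sqrt (((1+4*L)*W)^2) := Real.sqrt_le_sqrt h0
      _ = (1+4*L)*W := Real.sqrt_sq (by positivity)
  have hA2 : W*α ≤ 2*E := hWα
  have hB2 : W*|τ - τ'| ≤ (2*L*n+L+2)*E := le_trans hτΔ hΔ
  have hWβ : W * β ≤ CR*cM*(W*α) + CR*(W*|τ-τ'|) := by
    have h := mul_le_mul_of_nonneg_left hβ1 hWpos.le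
    have e1 : W * (CR * (cM * α) + CR * |τ - τ'|) = CR*cM*(W*α) + CR*(W*|τ-τ'|) := by ring
    linarith [e1 ▸ h]
  have h5 : W*β ≤ CR*cM*(2*E) + CR*((2*L*n+L+2)*E) := by
    have i1 : CR*cM*(W*α) ≤ CR*cM*(2*E) :=
      mul_le_mul_of_nonneg_left hA2 (by positivity)
    have i2 : CR*(W*|τ-τ'|) ≤ CR*((2*L*n+L+2)*E) :=
      mul_le_mul_of_nonneg_left hB2 hCR
    linarith
  have h6 : Real.sqrt (u1*u1') * β ≤ (1+4*L)*(W*β) := by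
    have h := mul_le_mul_of_nonneg_right hsr hβ0
    have e1 : (1+4*L) * W * β = (1+4*L)*(W*β) := by ring
    linarith [e1 ▸ h]
  have h7 : (1+4*L)*(W*β) ≤ (1+4*L)*(CR*cM*(2*E) + CR*((2*L*n+L+2)*E)) :=
    mul_le_mul_of_nonneg_left h5 (by linarith)
  have h8 : (1+4*L)*(CR*cM*(2*E) + CR*((2*L*n+L+2)*E))
      = CR * ((1+4*L)*(cM*2 + (2*L*n+L+2))) * E := by ring
  have hconst := mini_caseB_const hcM (by nlinarith [mul_le_mul_of_nonneg_left hn (by linarith : (0:ℝ) ≤ L)] : (20:ℝ) ≤ 2*L*n+L+2) hL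
  calc Real.sqrt (u1*u1') * β ≤ (1+4*L)*(W*β) := h6
    _ ≤ CR * ((1+4*L)*(cM*2 + (2*L*n+L+2))) * E := by rw [← h8]; exact h7
    _ ≤ CR * ((1+4*L) * (cM+1) * (2*L*n+L+2)^2 * 20) * E := by
        apply mul_le_mul_of_nonneg_right _ hE
        exact mul_le_mul_of_nonneg_left hconst hCR

private lemma phi_bound {L CR cM E n u u' t t' s s' m m' q q' τ τ' u1 u1' β α : ℝ}
    (hL : 6 < L) (hCR : 0 ≤ CR) (hcM : 1 ≤ cM) (hn : 1 ≤ n) (hE : 0 ≤ E)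
    (hu0 : 0 ≤ u) (ht : t = L - u) (ht0 : 0 ≤ t)
    (hu0' : 0 ≤ u') (ht' : t' = L - u') (ht0' : 0 ≤ t')
    (hs0 : 0 ≤ s) (hs1 : s ≤ 1) (hs0' : 0 ≤ s') (hs1' : s' ≤ 1)
    (hm0 : 0 ≤ m) (hm1 : m ≤ 1) (hm0' : 0 ≤ m') (hm1' : m' ≤ 1)
    (hq : q = s * m * t) (hq' : q' = s' * m' * t')
    (hτ : τ = max 0 (min 1 (q / max q u))) (hτ' : τ' = max 0 (min 1 (q' / max q' u')))
    (hu1a : u ≤ u1) (hu1b : u1 ≤ u + 4*L*(s*m)) (hu1L : u1 ≤ L)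
    (hu1a' : u' ≤ u1') (hu1b' : u1' ≤ u' + 4*L*(s'*m')) (hu1L' : u1' ≤ L)
    (hβ0 : 0 ≤ β) (hα0 : 0 ≤ α)
    (hβ1 : β ≤ CR * (cM * α) + CR * |τ - τ'|)
    (hβ2 : β ≤ CR * (1 - τ) + CR * (1 - τ'))
    (hWα : Real.sqrt (u * u') * α ≤ 2 * E)
    (hΔu : |u - u'| ≤ E) (hΔq : |q - q'| ≤ (2*L*n + L + 1) * E) :
    Real.sqrt (u1 * u1') * β ≤ CR * ((1+4*L) * (cM+1) * (2*L*n+L+2)^2 * 20) * E := by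
  have hsm1 : s*m ≤ 1 := mul_le_one₀ hs1 hm0 hm1
  have hsm1' : s'*m' ≤ 1 := mul_le_one₀ hs1' hm0' hm1'
  obtain ⟨hq0, hqt⟩ := mini_qt hq hs0 hm0 ht0 hsm1
  obtain ⟨hq0', hqt'⟩ := mini_qt hq' hs0' hm0' ht0' hsm1'
  have hu10 : 0 ≤ u1 := le_trans hu0 hu1a
  have hu1'0 : 0 ≤ u1' := le_trans hu0' hu1a'
  have hLn : 6 ≤ L*n := by nlinarith [mul_le_mul_of_nonneg_left hn (by linarith : (0:ℝ) ≤ L)]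
  have hΔ : |u - u'| + |q - q'| ≤ (2*L*n+L+2) * E := by
    have h1 : (2*L*n + L + 1) * E ≤ ((2*L*n+L+2) - 1) * E := by
      apply mul_le_mul_of_nonneg_right _ hE
      linarith
    linarith
  rcases lt_or_ge q u with hB | hC
  · rcases lt_or_ge q' u' with hB' | hC'
    · -- Case B
      exact phi_bound_B hL hCR hcM hn hE hu0 ht hu0' ht' hs0 hs0' hm0 hm0' hsm1 hsm1'
        hq hq' hq0 hq0' hτ hτ' hu1b hu1L hu10 hu1b' hu1L' hu1'0 hβ0 hβ1 hWα hΔ hB hB'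
    · -- Case C' (swap)
      have h := phi_bound_asym (τ := τ') (τ' := τ) hL hCR hcM hn hE hu0' ht' ht0' hu0 ht ht0
        hs0' hs1' hs0 hs1 hm0' hm1' hm0 hm1 hq' hq hτ
        hu1a' hu1b' hu1L' hu1a hu1b hu1L hβ0 (by linarith) hτ'
        (by rw [abs_sub_comm]; exact hΔu) (by rw [abs_sub_comm]; exact hΔq) hC' hB
      rw [mul_comm u1' u1] at h
      exact h
  · rcases lt_or_ge q' u' with hB' | hC'
    · exact phi_bound_asym hL hCR hcM hn hE hu0 ht ht0 hu0' ht' ht0' hs0 hs1 hs0' hs1'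
        hm0 hm1 hm0' hm1' hq hq' hτ' hu1a hu1b hu1L hu1a' hu1b' hu1L' hβ0 hβ2 hτ hΔu hΔq hC hB'
    · -- Case D
      have hRHS : (0:ℝ) ≤ CR * ((1+4*L) * (cM+1) * (2*L*n+L+2)^2 * 20) * E := by positivity
      rcases eq_or_lt_of_le hq0 with hq0e | hqpos
      · have hu_eq : u = 0 := le_antisymm (by linarith) hu0
        have htL : t = L := by rw [ht, hu_eq]; ring
        have hsm : s * m = 0 := by
          rcases mul_eq_zero.mp (by rw [htL] at hq; linarith : (s*m) * L = 0) with h | h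
          · exact h
          · exfalso; linarith
        have hu1_eq : u1 = 0 := le_antisymm (by rw [hsm] at hu1b; linarith) (by linarith)
        rw [hu1_eq, zero_mul, Real.sqrt_zero, zero_mul]
        exact hRHS
      rcases eq_or_lt_of_le hq0' with hq0e' | hqpos'
      · have hu_eq' : u' = 0 := le_antisymm (by linarith) hu0'
        have htL' : t' = L := by rw [ht', hu_eq']; ring
        have hsm' : s' * m' = 0 := by
          rcases mul_eq_zero.mp (by rw [htL'] at hq'; linarith : (s'*m') * L = 0) with h | h
          · exact h
          · exfalso; linarith
        have hu1_eq' : u1' = 0 := le_antisymm (by rw [hsm'] at hu1b'; linarith) (by linarith)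
        rw [hu1_eq', mul_zero, Real.sqrt_zero, zero_mul]
        exact hRHS
      · have hτ1 : τ = 1 := by
          rw [hτ, max_eq_left hC, div_self (ne_of_gt hqpos), min_self,
            max_eq_right zero_le_one]
        have hτ'1 : τ' = 1 := by
          rw [hτ', max_eq_left hC', div_self (ne_of_gt hqpos'), min_self,
            max_eq_right zero_le_one]
        have hβz : β = 0 := by
          rw [hτ1, hτ'1] at hβ2
          have : β ≤ 0 := by simpa using hβ2
          linarith
        rw [hβz, mul_zero]
        exact hRHS


private lemma abs_mul3 {x y z X Y Z : ℝ} (hx : |x| ≤ X) (hy : |y| ≤ Y) (hz : |z| ≤ Z) :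
    |x*(y*z)| ≤ X*(Y*Z) := by
  rw [abs_mul, abs_mul]
  exact mul_le_mul hx (mul_le_mul hy hz (abs_nonneg z) (le_trans (abs_nonneg y) hy))
    (mul_nonneg (abs_nonneg y) (abs_nonneg z)) (le_trans (abs_nonneg x) hx)

private lemma mini_g_lip {μ μ' : ℝ} (h : 1/2 ≤ μ) (h' : 1/2 ≤ μ') :
    |(1/μ - 1) - (1/μ' - 1)| ≤ 4*|μ - μ'| := by
  have hp : 0 < μ := by linarith
  have hp' : 0 < μ' := by linarith
  have e : (1/μ - 1) - (1/μ' - 1) = (μ' - μ)/(μ*μ') := by field_simp; ring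
  rw [e, abs_div, abs_of_pos (mul_pos hp hp'), abs_sub_comm μ' μ, div_le_iff₀ (mul_pos hp hp')]
  nlinarith [abs_nonneg (μ - μ'), mul_nonneg (abs_nonneg (μ - μ')) (by nlinarith : (0:ℝ) ≤ 4*(μ*μ') - 1)]

private lemma mini_theta_nonneg {a g s nv μ m : ℝ} (hn : 1 ≤ nv) (ha0 : 0 ≤ a)
    (hs0 : 0 ≤ s) (hs1 : s ≤ 1) (hμpos : 0 < μ) (hμ1 : μ ≤ 1)
    (hgdef : g = 1/μ - 1) (hkey : 1 - μ ≤ m) (hma : m ≤ nv*a) :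
    0 ≤ a + s*(a - nv⁻¹)*g := by
  have hnv : (0:ℝ) < nv := by linarith
  have hgμ : g*μ = 1-μ := by rw [hgdef]; field_simp
  have hexp : (a + s*(a - nv⁻¹)*g)*(μ*nv) = a*μ*nv + s*(nv*a - 1)*(g*μ) := by
    field_simp
  have h2 : 0 ≤ a*μ*nv + s*(nv*a - 1)*(1-μ) := by
    rcases le_total 1 (nv*a) with h | h
    · have := mul_nonneg (mul_nonneg hs0 (by linarith : (0:ℝ) ≤ nv*a - 1)) (by linarith : (0:ℝ) ≤ 1-μ)
      nlinarith
    · have hst : s*(nv*a-1)*(1-μ) ≥ 1*(nv*a-1)*(1-μ) := by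
        nlinarith [mul_nonneg (by linarith : (0:ℝ) ≤ 1-s) (mul_nonneg (by linarith : (0:ℝ) ≤ 1-nv*a) (by linarith : (0:ℝ) ≤ 1-μ))]
      nlinarith
  rw [hgμ] at hexp
  nlinarith [mul_pos hμpos hnv]

private lemma mini_t1_nonneg {t L g s μ : ℝ} (hgdef : g = 1/μ - 1) (hμpos : 0 < μ)
    (h1μt : 2*L*(1-μ) ≤ t) (hs0 : 0 ≤ s) (hs1 : s ≤ 1) (ht0 : 0 ≤ t) (htL : t ≤ L)
    (hL : 6 < L) (hg0 : 0 ≤ g) :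
    0 ≤ t - s*(2*L - t)*g := by
  have h1 : (2*L-t)*(1-μ) ≤ t*μ := by nlinarith
  have h2 : (2*L-t)*g*μ = (2*L-t)*(1-μ) := by rw [hgdef]; field_simp; try ring
  have h3 : (2*L-t)*g ≤ t := by
    have := h2.le.trans h1
    have h4 : (2*L-t)*g*μ ≤ t*μ := by linarith
    exact le_of_mul_le_mul_right (by linarith [h4]) hμpos
  nlinarith [mul_nonneg (by linarith : (0:ℝ) ≤ 2*L - t) hg0,
    mul_nonneg (mul_nonneg hs0 (by linarith : (0:ℝ) ≤ 2*L - t)) hg0]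

private lemma mini_u1b {g μ m t L s : ℝ} (hgdef : g = 1/μ - 1) (hμlo : 1/2 ≤ μ)
    (hμ1 : μ ≤ 1) (h1μm : 1 - μ ≤ m) (ht0 : 0 ≤ t) (htL : t ≤ L) (hs0 : 0 ≤ s)
    (hL : 6 < L) (hm0 : 0 ≤ m) :
    s*(2*L - t)*g ≤ 4*L*(s*m) := by
  have hμpos : (0:ℝ) < μ := by linarith
  have hg2 : g ≤ 2*(1-μ) := by
    rw [hgdef]
    rw [div_sub' (ne_of_gt hμpos), div_le_iff₀ hμpos]
    nlinarith
  have hgm : g ≤ 2*m := by linarith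
  have hg0 : 0 ≤ g := by
    rw [hgdef]; have : 1 ≤ 1/μ := by rw [le_div_iff₀ hμpos]; linarith
    linarith
  have h1 : s*(2*L - t)*g ≤ s*(2*L)*(2*m) := by
    have h2 : (2*L-t)*g ≤ (2*L)*(2*m) := by nlinarith
    nlinarith [mul_le_mul_of_nonneg_left h2 hs0]
  nlinarith

private lemma mini_Wα {W α E : ℝ} (h : 2/Real.pi*(W*α) ≤ E) (h0 : 0 ≤ W*α) :
    W*α ≤ 2*E := by
  have hπ : 0 < Real.pi := Real.pi_pos
  have h4 : Real.pi ≤ 4 := Real.pi_le_four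
  have hd : 1/2 ≤ 2/Real.pi := by rw [le_div_iff₀ hπ]; linarith
  nlinarith

private lemma mini_dq {s s' m m' t t' E n L : ℝ}
    (hss : |s - s'| ≤ E) (hmm : |m - m'| ≤ n*E) (htt : |t - t'| ≤ E)
    (hs0 : 0 ≤ s) (hs1 : s ≤ 1) (hs0' : 0 ≤ s') (hs1' : s' ≤ 1)
    (hm0 : 0 ≤ m) (hm1 : m ≤ 1) (hm0' : 0 ≤ m') (hm1' : m' ≤ 1)
    (ht0 : 0 ≤ t) (htL : t ≤ L) (ht0' : 0 ≤ t') (htL' : t' ≤ L)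
    (hn : 1 ≤ n) (hL : 6 < L) (hE : 0 ≤ E) :
    |s*m*t - s'*m'*t'| ≤ (2*L*n + L + 1)*E := by
  have e : s*m*t - s'*m'*t' = (s-s')*(m*t) + ((m-m')*(s'*t) + (t-t')*(s'*m')) := by ring
  have h1 : |(s-s')*(m*t)| ≤ E*(1*L) := abs_mul3 hss
    (by rw [abs_of_nonneg hm0]; exact hm1) (by rw [abs_of_nonneg ht0]; exact htL)
  have h2 : |(m-m')*(s'*t)| ≤ (n*E)*(1*L) := abs_mul3 hmm
    (by rw [abs_of_nonneg hs0']; exact hs1') (by rw [abs_of_nonneg ht0]; exact htL)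
  have h3 : |(t-t')*(s'*m')| ≤ E*(1*1) := abs_mul3 htt
    (by rw [abs_of_nonneg hs0']; exact hs1') (by rw [abs_of_nonneg hm0']; exact hm1')
  calc |s*m*t - s'*m'*t'| = |(s-s')*(m*t) + ((m-m')*(s'*t) + (t-t')*(s'*m'))| := by rw [e]
    _ ≤ |(s-s')*(m*t)| + (|(m-m')*(s'*t)| + |(t-t')*(s'*m')|) :=
        (abs_add_le _ _).trans (by gcongr; exact abs_add_le _ _)
    _ ≤ E*(1*L) + ((n*E)*(1*L) + E*(1*1)) := by linarith
    _ ≤ (2*L*n + L + 1)*E := by nlinarith [mul_nonneg (mul_nonneg (by linarith : (0:ℝ) ≤ L) (by linarith : (0:ℝ) ≤ n)) hE]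

private lemma mini_dtheta {a a' bb g g' s s' E n1 : ℝ}
    (habs : |a - a'| ≤ E) (hss : |s - s'| ≤ E) (hgg : |g - g'| ≤ n1*E)
    (hab : |a - bb| ≤ 1) (hab' : |a' - bb| ≤ 1)
    (hg0 : 0 ≤ g) (hg1 : g ≤ 1) (hg0' : 0 ≤ g') (hg1' : g' ≤ 1)
    (hs0' : 0 ≤ s') (hs1' : s' ≤ 1) :
    |a + s*(a-bb)*g - (a' + s'*(a'-bb)*g')| ≤ (3 + n1)*E := by
  have e : a + s*(a-bb)*g - (a' + s'*(a'-bb)*g')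
      = (a - a') + ((s - s')*((a-bb)*g) + ((a-a')*(g*s') + (g-g')*((a'-bb)*s'))) := by ring
  have h1 : |(s-s')*((a-bb)*g)| ≤ E*(1*1) := abs_mul3 hss hab
    (by rw [abs_of_nonneg hg0]; exact hg1)
  have h2 : |(a-a')*(g*s')| ≤ E*(1*1) := abs_mul3 habs
    (by rw [abs_of_nonneg hg0]; exact hg1) (by rw [abs_of_nonneg hs0']; exact hs1')
  have h3 : |(g-g')*((a'-bb)*s')| ≤ (n1*E)*(1*1) := abs_mul3 hgg hab'
    (by rw [abs_of_nonneg hs0']; exact hs1')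
  calc |a + s*(a-bb)*g - (a' + s'*(a'-bb)*g')|
      = |(a - a') + ((s - s')*((a-bb)*g) + ((a-a')*(g*s') + (g-g')*((a'-bb)*s')))| := by rw [e]
    _ ≤ |a - a'| + (|(s - s')*((a-bb)*g)| + (|(a-a')*(g*s')| + |(g-g')*((a'-bb)*s')|)) := by
        refine (abs_add_le _ _).trans ?_
        gcongr
        refine (abs_add_le _ _).trans ?_
        gcongr
        exact abs_add_le _ _
    _ ≤ (3 + n1)*E := by nlinarith

private lemma mini_dt1 {t t' g g' s s' E n1 L : ℝ}
    (htt : |t - t'| ≤ E) (hss : |s - s'| ≤ E) (hgg : |g - g'| ≤ n1*E)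
    (ht0 : 0 ≤ t) (htL : t ≤ L) (ht0' : 0 ≤ t') (htL' : t' ≤ L) (hL : 0 < L)
    (hg0 : 0 ≤ g) (hg1 : g ≤ 1) (hg0' : 0 ≤ g') (hg1' : g' ≤ 1)
    (hs0' : 0 ≤ s') (hs1' : s' ≤ 1) :
    |(t - s*(2*L - t)*g) - (t' - s'*(2*L - t')*g')| ≤ (2 + 2*L + 2*L*n1)*E := by
  have e : (t - s*(2*L - t)*g) - (t' - s'*(2*L - t')*g')
      = (t - t') - ((s - s')*((2*L-t)*g) + ((t'-t)*(g*s') + (g-g')*((2*L-t')*s'))) := by ring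
  have h1 : |(s-s')*((2*L-t)*g)| ≤ E*((2*L)*1) := abs_mul3 hss
    (by rw [abs_of_nonneg (by linarith)]; linarith) (by rw [abs_of_nonneg hg0]; exact hg1)
  have h2 : |(t'-t)*(g*s')| ≤ E*(1*1) := abs_mul3 (by rw [abs_sub_comm]; exact htt)
    (by rw [abs_of_nonneg hg0]; exact hg1) (by rw [abs_of_nonneg hs0']; exact hs1')
  have h3 : |(g-g')*((2*L-t')*s')| ≤ (n1*E)*((2*L)*1) := abs_mul3 hgg
    (by rw [abs_of_nonneg (by linarith)]; linarith) (by rw [abs_of_nonneg hs0']; exact hs1')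
  calc |(t - s*(2*L - t)*g) - (t' - s'*(2*L - t')*g')|
      = |(t - t') - ((s - s')*((2*L-t)*g) + ((t'-t)*(g*s') + (g-g')*((2*L-t')*s')))| := by rw [e]
    _ ≤ |t - t'| + (|(s - s')*((2*L-t)*g)| + (|(t'-t)*(g*s')| + |(g-g')*((2*L-t')*s')|)) := by
        refine (abs_sub _ _).trans ?_
        gcongr
        refine (abs_add_le _ _).trans ?_
        gcongr
        exact abs_add_le _ _
    _ ≤ (2 + 2*L + 2*L*n1)*E := by nlinarith

/-- For a `k`-simplex `σ` of the nerve of a finite good covering of a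
compact metric space, the product `σ × K(U_σ)` admits a Lipschitz strong deformation
retraction onto `(σ × U_σ × {0}) ∪ (∂σ × K(U_σ))`.  Everything is expressed on
representatives `(θ, x, t) ∈ σ × U_σ × [0,L]` of `σ × K(U_σ)`, with Lipschitz continuity
measured by the distance `prodConeDist` and equality in the cone expressed as vanishing of
that distance. -/
theorem simplex_cone_lipSDR {M : Type*} [MetricSpace M] [CompactSpace M]
    {N : ℕ} (U : Fin N → Set M) (hU : IsGoodCovering U) (L : ℝ) (hL : 6 < L)
    (k : ℕ) (σ : Finset (Fin N)) (hcard : σ.card = k + 1)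
    (hσ : (⋂ j ∈ σ, U j).Nonempty) :
    ∃ (F : ((Fin N → ℝ) × M × ℝ) × unitInterval → (Fin N → ℝ) × M × ℝ) (K : NNReal),
      (∀ z : (Fin N → ℝ) × M × ℝ,
        z.1 ∈ SimplexSet σ → z.2.1 ∈ ⋂ j ∈ σ, U j → z.2.2 ∈ Icc 0 L →
        ∀ t : unitInterval,
          (F (z, t)).1 ∈ SimplexSet σ ∧ (F (z, t)).2.1 ∈ ⋂ j ∈ σ, U j ∧
            (F (z, t)).2.2 ∈ Icc 0 L) ∧
      (∀ z w : (Fin N → ℝ) × M × ℝ,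
        z.1 ∈ SimplexSet σ → z.2.1 ∈ ⋂ j ∈ σ, U j → z.2.2 ∈ Icc 0 L →
        w.1 ∈ SimplexSet σ → w.2.1 ∈ ⋂ j ∈ σ, U j → w.2.2 ∈ Icc 0 L →
        ∀ s t : unitInterval,
          prodConeDist L (F (z, s)) (F (w, t)) ≤
            K * max (prodConeDist L z w) (dist s t)) ∧
      (∀ z : (Fin N → ℝ) × M × ℝ,
        z.1 ∈ SimplexSet σ → z.2.1 ∈ ⋂ j ∈ σ, U j → z.2.2 ∈ Icc 0 L →
          prodConeDist L (F (z, 0)) z = 0) ∧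
      (∀ z : (Fin N → ℝ) × M × ℝ,
        z.1 ∈ SimplexSet σ → z.2.1 ∈ ⋂ j ∈ σ, U j → z.2.2 ∈ Icc 0 L →
          ((F (z, 1)).2.2 = 0 ∨ ∃ j ∈ σ, (F (z, 1)).1 j = 0)) ∧
      (∀ z : (Fin N → ℝ) × M × ℝ,
        z.1 ∈ SimplexSet σ → z.2.1 ∈ ⋂ j ∈ σ, U j → z.2.2 ∈ Icc 0 L →
        (z.2.2 = 0 ∨ ∃ j ∈ σ, z.1 j = 0) →
        ∀ t : unitInterval, prodConeDist L (F (z, t)) z = 0) := by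
  classical
  have hLpos : (0:ℝ) < L := by linarith
  have hne : σ.Nonempty := Finset.card_pos.mp (by omega)
  set V : Set M := ⋂ j ∈ σ, U j with hV
  obtain ⟨p, R, CRet, hRlip, hR0, hR1, hRp⟩ := hU.2.2.2.2 σ hne hσ
  set n : ℕ := σ.card with hn
  have hnn : 1 ≤ n := by omega
  have hn1 : 1 ≤ (n:ℝ) := by exact_mod_cast hnn
  have hnne : (n:ℝ) ≠ 0 := by linarith
  set b : Fin N → ℝ := fun j => if j ∈ σ then ((n:ℝ))⁻¹ else 0 with hb
  set mf : (Fin N → ℝ) → ℝ := fun θ => (n:ℝ) * σ.inf' hne θ with hmf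
  set μf : (Fin N → ℝ) → ℝ → ℝ := fun θ t => max (1 - t/(2*L)) (1 - mf θ) with hμf
  set gf : (Fin N → ℝ) → ℝ → ℝ := fun θ t => 1/(μf θ t) - 1 with hgf
  set th1 : (Fin N → ℝ) → ℝ → ℝ → (Fin N → ℝ) :=
    fun θ t s => fun j => θ j + s*(θ j - b j)*(gf θ t) with hth1
  set t1f : (Fin N → ℝ) → ℝ → ℝ → ℝ := fun θ t s => t - s*(2*L - t)*(gf θ t) with ht1f
  set qf : (Fin N → ℝ) → ℝ → ℝ → ℝ := fun θ t s => s * mf θ * t with hqf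
  set τf : (Fin N → ℝ) → ℝ → ℝ → ℝ :=
    fun θ t s => max 0 (min 1 (qf θ t s / max (qf θ t s) (L - t))) with hτf
  have hτmem : ∀ θ t s, τf θ t s ∈ unitInterval := fun θ t s =>
    ⟨le_max_left _ _, max_le zero_le_one (min_le_left _ _)⟩
  set F : ((Fin N → ℝ) × M × ℝ) × unitInterval → (Fin N → ℝ) × M × ℝ :=
    fun zs => (th1 zs.1.1 zs.1.2.2 (zs.2 : ℝ),
      (if h : zs.1.2.1 ∈ V then
        ((R (⟨zs.1.2.1, h⟩, ⟨τf zs.1.1 zs.1.2.2 (zs.2 : ℝ), hτmem _ _ _⟩) : V) : M)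
      else zs.1.2.1),
      t1f zs.1.1 zs.1.2.2 (zs.2 : ℝ)) with hF
  set cM : ℝ := max 1 (Metric.diam (univ : Set M) / Real.pi) with hcM
  have hcM1 : 1 ≤ cM := le_max_left _ _
  set CRr : ℝ := (CRet : ℝ) with hCRr
  have hCR0 : 0 ≤ CRr := CRet.coe_nonneg
  set Kr : ℝ := (8+4*(n:ℝ)) + (2+2*L+8*L*(1+(n:ℝ)))
      + CRr*((1+4*L)*(cM+1)*(2*L*(n:ℝ)+L+2)^2*20) with hKr
  have hKr0 : (0:ℝ) ≤ Kr := by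
    have h1 : (0:ℝ) ≤ (8+4*(n:ℝ)) := by positivity
    have h2 : (0:ℝ) ≤ 2+2*L+8*L*(1+(n:ℝ)) := by
      have : (0:ℝ) ≤ (n:ℝ) := by positivity
      nlinarith
    have h3 : (0:ℝ) ≤ CRr*((1+4*L)*(cM+1)*(2*L*(n:ℝ)+L+2)^2*20) := by
      apply mul_nonneg hCR0
      have hc0 : (0:ℝ) ≤ cM + 1 := by linarith
      have : (0:ℝ) ≤ (1+4*L) := by linarith
      positivity
    linarith
  -- sum of b
  have hsb : ∑ j, b j = 1 := by
    have e1 : ∑ j, b j = ∑ j ∈ Finset.univ ∩ σ, ((n:ℝ))⁻¹ := Finset.sum_ite_mem _ _ _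
    rw [e1, Finset.univ_inter, Finset.sum_const, nsmul_eq_mul, ← hn, mul_inv_cancel₀ hnne]
  -- the pack of basic facts
  have pack : ∀ (θ : Fin N → ℝ) (t : ℝ), θ ∈ SimplexSet σ → t ∈ Icc 0 L →
      ∀ s : ℝ, 0 ≤ s → s ≤ 1 →
      (th1 θ t s ∈ SimplexSet σ) ∧ (t1f θ t s ∈ Icc 0 t) ∧
      0 ≤ mf θ ∧ mf θ ≤ 1 ∧ 1/2 ≤ μf θ t ∧ μf θ t ≤ 1 ∧ 0 ≤ gf θ t ∧ gf θ t ≤ 1 ∧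
      (1 - μf θ t ≤ mf θ) ∧ (2*L*(1 - μf θ t) ≤ t) ∧ (∀ j, θ j ≤ 1) := by
    intro θ t hθ ht s hs0 hs1
    obtain ⟨hposv, hsumv, hsuppv⟩ := hθ
    obtain ⟨ht0, htL⟩ := ht
    have hθ1 : ∀ j, θ j ≤ 1 := by
      intro j
      have h := Finset.single_le_sum (f := θ) (fun i _ => hposv i) (Finset.mem_univ j)
      rw [hsumv] at h; exact h
    have hinf0 : 0 ≤ σ.inf' hne θ := Finset.le_inf' hne θ (fun j _ => hposv j)
    have hm0 : 0 ≤ mf θ := mul_nonneg (by positivity) hinf0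
    have hm1 : mf θ ≤ 1 := by
      have h1 : mf θ = ∑ _j ∈ σ, σ.inf' hne θ := by
        rw [Finset.sum_const, nsmul_eq_mul, ← hn]
      have h2 : ∑ _j ∈ σ, σ.inf' hne θ ≤ ∑ j ∈ σ, θ j :=
        Finset.sum_le_sum (fun j hj => Finset.inf'_le θ hj)
      have h3 : ∑ j ∈ σ, θ j ≤ ∑ j, θ j :=
        Finset.sum_le_sum_of_subset_of_nonneg (Finset.subset_univ σ) (fun j _ _ => hposv j)
      rw [h1]; rw [hsumv] at h3; linarith
    have hμlo : 1/2 ≤ μf θ t := by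
      have h2 : t/(2*L) ≤ 1/2 := by rw [div_le_iff₀ (by linarith)]; linarith
      exact le_trans (by linarith) (le_max_left (1 - t/(2*L)) (1 - mf θ))
    have hμ1 : μf θ t ≤ 1 := by
      apply max_le
      · have : (0:ℝ) ≤ t/(2*L) := by positivity
        linarith
      · linarith
    have hμpos : 0 < μf θ t := by linarith
    have hg0 : 0 ≤ gf θ t := by
      have h2 : 1 ≤ 1/(μf θ t) := by rw [le_div_iff₀ hμpos]; linarith
      show 0 ≤ 1/(μf θ t) - 1
      linarith
    have hg1 : gf θ t ≤ 1 := by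
      have h2 : 1/(μf θ t) ≤ 2 := by rw [div_le_iff₀ hμpos]; linarith
      show 1/(μf θ t) - 1 ≤ 1
      linarith
    have h1μm : 1 - μf θ t ≤ mf θ := by
      have h2 := le_max_right (1 - t/(2*L)) (1 - mf θ)
      have e : μf θ t = max (1 - t/(2*L)) (1 - mf θ) := rfl
      rw [e]; linarith
    have h1μt : 2*L*(1 - μf θ t) ≤ t := by
      have h2 := le_max_left (1 - t/(2*L)) (1 - mf θ)
      have e : μf θ t = max (1 - t/(2*L)) (1 - mf θ) := rfl
      have h3 : 1 - μf θ t ≤ t/(2*L) := by rw [e]; linarith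
      calc 2*L*(1 - μf θ t) ≤ 2*L*(t/(2*L)) := by
            apply mul_le_mul_of_nonneg_left h3 (by linarith)
        _ = t := by field_simp
    have hth0 : ∀ j, j ∉ σ → th1 θ t s j = 0 := by
      intro j hj
      have hθj0 : θ j = 0 := by
        by_contra hc; exact hj (hsuppv j hc)
      have e : th1 θ t s j = θ j + s*(θ j - b j)*(gf θ t) := rfl
      have eb : b j = 0 := if_neg hj
      rw [e, eb, hθj0]; ring
    have hthmem : th1 θ t s ∈ SimplexSet σ := by
      refine ⟨?_, ?_, ?_⟩
      · intro j
        by_cases hj : j ∈ σ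
        · have hbj : b j = (n:ℝ)⁻¹ := if_pos hj
          have e : th1 θ t s j = θ j + s*(θ j - (n:ℝ)⁻¹)*(gf θ t) := by
            show θ j + s*(θ j - b j)*(gf θ t) = _
            rw [hbj]
          rw [e]
          refine mini_theta_nonneg hn1 (hposv j) hs0 hs1 hμpos hμ1 rfl h1μm ?_
          have h2 : σ.inf' hne θ ≤ θ j := Finset.inf'_le θ hj
          calc mf θ = (n:ℝ) * σ.inf' hne θ := rfl
            _ ≤ (n:ℝ) * θ j := by
                apply mul_le_mul_of_nonneg_left h2 (by positivity)
        · rw [hth0 j hj]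
      · have e1 : ∀ j, th1 θ t s j = θ j + (θ j - b j)*(s*gf θ t) := by
          intro j; show θ j + s*(θ j - b j)*(gf θ t) = _; ring
        calc ∑ j, th1 θ t s j = ∑ j, (θ j + (θ j - b j)*(s*gf θ t)) :=
              Finset.sum_congr rfl (fun j _ => e1 j)
          _ = (∑ j, θ j) + ((∑ j, θ j) - ∑ j, b j)*(s*gf θ t) := by
              rw [Finset.sum_add_distrib, ← Finset.sum_sub_distrib, Finset.sum_mul]
          _ = 1 := by rw [hsumv, hsb]; ring
      · intro j hj
        by_contra hc
        exact hj (hth0 j hc ▸ rfl)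
    have ht1mem : t1f θ t s ∈ Icc 0 t := by
      constructor
      · exact mini_t1_nonneg rfl hμpos h1μt hs0 hs1 ht0 htL hL hg0
      · have h2 : 0 ≤ s*(2*L - t)*(gf θ t) :=
          mul_nonneg (mul_nonneg hs0 (by linarith)) hg0
        show t - s*(2*L - t)*(gf θ t) ≤ t
        linarith
    exact ⟨hthmem, ht1mem, hm0, hm1, hμlo, hμ1, hg0, hg1, h1μm, h1μt, hθ1⟩
  refine ⟨F, Real.toNNReal Kr, ?_, ?_, ?_, ?_, ?_⟩
  · -- condition 1: membership
    rintro ⟨θ, x, t⟩ hz1 hz2 hz3 s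
    obtain ⟨hmem1, hmem2, _⟩ := pack θ t hz1 hz3 (s:ℝ) s.2.1 s.2.2
    refine ⟨hmem1, ?_, ⟨hmem2.1, le_trans hmem2.2 hz3.2⟩⟩
    show (if h : x ∈ V then
        ((R (⟨x, h⟩, ⟨τf θ t (s : ℝ), hτmem _ _ _⟩) : V) : M) else x) ∈ V
    rw [dif_pos hz2]
    exact (R _).2
  · -- condition 2: Lipschitz
    rintro ⟨θ, x, t⟩ ⟨θ', x', t'⟩ hz1 hz2 hz3 hw1 hw2 hw3 s s'
    obtain ⟨hthm, ht1m, hm0, hm1, hμlo, hμ1, hg0, hg1, h1μm, h1μt, hθ1⟩ :=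
      pack θ t hz1 hz3 (s:ℝ) s.2.1 s.2.2
    obtain ⟨hthm', ht1m', hm0', hm1', hμlo', hμ1', hg0', hg1', h1μm', h1μt', hθ1'⟩ :=
      pack θ' t' hw1 hw3 (s':ℝ) s'.2.1 s'.2.2
    have ht0 : (0:ℝ) ≤ t := hz3.1
    have htL : t ≤ L := hz3.2
    have ht0' : (0:ℝ) ≤ t' := hw3.1
    have htL' : t' ≤ L := hw3.2
    set E : ℝ := max (prodConeDist L (θ,x,t) (θ',x',t')) (dist s s') with hE
    have hD0 : 0 ≤ prodConeDist L (θ,x,t) (θ',x',t') := prodConeDist_nonneg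
    have hE0 : 0 ≤ E := le_trans hD0 (le_max_left _ _)
    have hSE : |(s:ℝ) - (s':ℝ)| ≤ E := by
      have h1 : dist s s' = |(s:ℝ) - (s':ℝ)| := by rw [Subtype.dist_eq, Real.dist_eq]
      rw [← h1]; exact le_max_right _ _
    have hDθE : dist θ θ' ≤ E :=
      le_trans (dist_fst_le_prodConeDist (L := L) (z := (θ,x,t)) (w := (θ',x',t')))
        (le_max_left _ _)
    have hcd : coneDist L (x,t) (x',t') ≤ E :=
      le_trans (coneDist_le_prodConeDist (L := L) (z := (θ,x,t)) (w := (θ',x',t')))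
        (le_max_left _ _)
    have hΔtE : |t - t'| ≤ E :=
      le_trans (abs_sub_le_coneDist (c := (x,t)) (c' := (x',t')) htL htL') hcd
    set α : ℝ := min Real.pi (dist x x') with hα
    have hα0 : 0 ≤ α := le_min Real.pi_pos.le dist_nonneg
    have hWαE : Real.sqrt ((L - t)*(L - t'))*α ≤ 2*E :=
      mini_Wα (le_trans (mul_min_le_coneDist (c := (x,t)) (c' := (x',t')) htL htL') hcd)
        (mul_nonneg (Real.sqrt_nonneg _) hα0)
    -- differences of m, μ, g
    have hθj : ∀ j, |θ j - θ' j| ≤ dist θ θ' := fun j => by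
      have h := dist_le_pi_dist θ θ' j; rwa [Real.dist_eq] at h
    have hΔinf : |σ.inf' hne θ - σ.inf' hne θ'| ≤ dist θ θ' := by
      obtain ⟨j, hj, hjv⟩ := Finset.exists_mem_eq_inf' hne θ'
      obtain ⟨i, hi, hiv⟩ := Finset.exists_mem_eq_inf' hne θ
      rw [abs_sub_le_iff]
      constructor
      · have h1 : σ.inf' hne θ ≤ θ j := Finset.inf'_le θ hj
        have h2 := abs_le.mp (hθj j)
        rw [hjv]
        linarith [h2.2]
      · have h1 : σ.inf' hne θ' ≤ θ' i := Finset.inf'_le θ' hi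
        have h2 := abs_le.mp (hθj i)
        rw [hiv]
        linarith [h2.1]
    have hΔm : |mf θ - mf θ'| ≤ (n:ℝ)*dist θ θ' := by
      have e : mf θ - mf θ' = (n:ℝ)*(σ.inf' hne θ - σ.inf' hne θ') := by
        show (n:ℝ)*σ.inf' hne θ - (n:ℝ)*σ.inf' hne θ' = _
        ring
      rw [e, abs_mul, abs_of_nonneg (by positivity : (0:ℝ) ≤ (n:ℝ))]
      exact mul_le_mul_of_nonneg_left hΔinf (by positivity)
    have hΔmE : |mf θ - mf θ'| ≤ (n:ℝ)*E :=
      le_trans hΔm (mul_le_mul_of_nonneg_left hDθE (by positivity))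
    have hΔμ : |μf θ t - μf θ' t'| ≤ (1 + (n:ℝ))*E := by
      have h := abs_max_sub_max_le_max (1 - t/(2*L)) (1 - mf θ) (1 - t'/(2*L)) (1 - mf θ')
      have e1 : |(1 - t/(2*L)) - (1 - t'/(2*L))| ≤ E := by
        rw [show (1 - t/(2*L)) - (1 - t'/(2*L)) = (t' - t)/(2*L) by ring,
          abs_div, abs_of_pos (by linarith : (0:ℝ) < 2*L), div_le_iff₀ (by linarith)]
        have h2 := hΔtE
        rw [abs_sub_comm] at h2
        calc |t' - t| ≤ E := h2
          _ = E*1 := (mul_one E).symm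
          _ ≤ E*(2*L) := mul_le_mul_of_nonneg_left (by linarith) hE0
      have e2 : |(1 - mf θ) - (1 - mf θ')| ≤ (n:ℝ)*E := by
        rw [show (1 - mf θ) - (1 - mf θ') = -(mf θ - mf θ') by ring, abs_neg]
        exact hΔmE
      have h3 : max |(1 - t/(2*L)) - (1 - t'/(2*L))| |(1 - mf θ) - (1 - mf θ')|
          ≤ (1+(n:ℝ))*E := by
        have hnE : (0:ℝ) ≤ (n:ℝ)*E := mul_nonneg (by positivity) hE0
        apply max_le
        · linarith
        · linarith
      exact le_trans h h3
    have hΔg : |gf θ t - gf θ' t'| ≤ 4*(1+(n:ℝ))*E := by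
      have h1 : |gf θ t - gf θ' t'| ≤ 4*|μf θ t - μf θ' t'| := mini_g_lip hμlo hμlo'
      have h2 : 4*|μf θ t - μf θ' t'| ≤ 4*((1+(n:ℝ))*E) :=
        mul_le_mul_of_nonneg_left hΔμ (by norm_num)
      calc |gf θ t - gf θ' t'| ≤ 4*((1+(n:ℝ))*E) := le_trans h1 h2
        _ = 4*(1+(n:ℝ))*E := by ring
    -- bounds on b
    have hbj01 : ∀ j, 0 ≤ b j ∧ b j ≤ 1 := by
      intro j
      show 0 ≤ (if j ∈ σ then ((n:ℝ))⁻¹ else 0) ∧ (if j ∈ σ then ((n:ℝ))⁻¹ else 0) ≤ 1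
      split
      · constructor
        · positivity
        · rw [inv_le_one_iff₀]
          right; exact hn1
      · norm_num
    -- first-component distance of outputs
    have hdθout : dist (th1 θ t (s:ℝ)) (th1 θ' t' (s':ℝ)) ≤ (7 + 4*(n:ℝ))*E := by
      refine (dist_pi_le_iff (mul_nonneg (by positivity) hE0)).mpr ?_
      intro j
      rw [Real.dist_eq]
      have habj : |θ j - b j| ≤ 1 := by
        rw [abs_le]
        constructor
        · linarith [hz1.1 j, (hbj01 j).2]
        · linarith [hθ1 j, (hbj01 j).1]
      have habj' : |θ' j - b j| ≤ 1 := by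
        rw [abs_le]
        constructor
        · linarith [hw1.1 j, (hbj01 j).2]
        · linarith [hθ1' j, (hbj01 j).1]
      have h := mini_dtheta (le_trans (hθj j) hDθE) hSE hΔg habj habj'
        hg0 hg1 hg0' hg1' s'.2.1 s'.2.2
      calc |th1 θ t (s:ℝ) j - th1 θ' t' (s':ℝ) j|
          = |θ j + (s:ℝ)*(θ j - b j)*(gf θ t) - (θ' j + (s':ℝ)*(θ' j - b j)*(gf θ' t'))| := rfl
        _ ≤ (3 + 4*(1+(n:ℝ)))*E := h
        _ = (7 + 4*(n:ℝ))*E := by ring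
    -- t1 difference
    have hdt1 : |t1f θ t (s:ℝ) - t1f θ' t' (s':ℝ)| ≤ (2 + 2*L + 2*L*(4*(1+(n:ℝ))))*E := by
      have h := mini_dt1 hΔtE hSE hΔg ht0 htL ht0' htL' hLpos
        hg0 hg1 hg0' hg1' s'.2.1 s'.2.2
      exact h
    -- the image points in V
    set a1 : V × unitInterval := (⟨x, hz2⟩, ⟨τf θ t (s:ℝ), hτmem θ t (s:ℝ)⟩) with ha1
    set a2 : V × unitInterval := (⟨x', hw2⟩, ⟨τf θ' t' (s':ℝ), hτmem θ' t' (s':ℝ)⟩) with ha2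
    set x1 : M := ((R a1 : V) : M) with hx1
    set x2 : M := ((R a2 : V) : M) with hx2
    set β : ℝ := min Real.pi (dist x1 x2) with hβ
    have hβ0 : 0 ≤ β := le_min Real.pi_pos.le dist_nonneg
    have hτ01 : 0 ≤ τf θ t (s:ℝ) ∧ τf θ t (s:ℝ) ≤ 1 := hτmem θ t (s:ℝ)
    have hτ01' : 0 ≤ τf θ' t' (s':ℝ) ∧ τf θ' t' (s':ℝ) ≤ 1 := hτmem θ' t' (s':ℝ)
    have hxd : dist x x' ≤ cM*α := by
      rcases le_total (dist x x') Real.pi with hc | hc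
      · have e : α = dist x x' := min_eq_right hc
        rw [e]
        have h2 := mul_le_mul_of_nonneg_right hcM1 (dist_nonneg (x := x) (y := x'))
        linarith
      · have e : α = Real.pi := min_eq_left hc
        have hdd : dist x x' ≤ Metric.diam (univ : Set M) :=
          Metric.dist_le_diam_of_mem (isCompact_univ.isBounded) (mem_univ x) (mem_univ x')
        have h2 : Metric.diam (univ : Set M) / Real.pi ≤ cM := le_max_right _ _
        rw [e]
        calc dist x x' ≤ Metric.diam (univ : Set M) := hdd
          _ = (Metric.diam (univ : Set M) / Real.pi) * Real.pi := by
              field_simp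
          _ ≤ cM * Real.pi := mul_le_mul_of_nonneg_right h2 Real.pi_pos.le
    have hβ1 : β ≤ CRr*(cM*α) + CRr*|τf θ t (s:ℝ) - τf θ' t' (s':ℝ)| := by
      have h := hRlip.dist_le_mul a1 a2
      have hd : dist a1 a2 = max (dist x x') |τf θ t (s:ℝ) - τf θ' t' (s':ℝ)| := by
        rw [Prod.dist_eq, Subtype.dist_eq, Subtype.dist_eq, Real.dist_eq]
      have hsub : dist x1 x2 = dist (R a1) (R a2) := (Subtype.dist_eq (R a1) (R a2)).symm
      have h2 : max (dist x x') |τf θ t (s:ℝ) - τf θ' t' (s':ℝ)|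
          ≤ cM*α + |τf θ t (s:ℝ) - τf θ' t' (s':ℝ)| := by
        apply max_le
        · exact le_add_of_le_of_nonneg hxd (abs_nonneg _)
        · apply le_add_of_nonneg_left
          positivity
      calc β ≤ dist x1 x2 := min_le_right _ _
        _ = dist (R a1) (R a2) := hsub
        _ ≤ CRr * dist a1 a2 := h
        _ = CRr * (max (dist x x') |τf θ t (s:ℝ) - τf θ' t' (s':ℝ)|) := by rw [hd]
        _ ≤ CRr * (cM*α + |τf θ t (s:ℝ) - τf θ' t' (s':ℝ)|) :=
            mul_le_mul_of_nonneg_left h2 hCR0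
        _ = CRr*(cM*α) + CRr*|τf θ t (s:ℝ) - τf θ' t' (s':ℝ)| := by ring
    have hdp1 : dist x1 (p : M) ≤ CRr * (1 - τf θ t (s:ℝ)) := by
      have h := hRlip.dist_le_mul a1 (⟨x, hz2⟩, 1)
      rw [hR1 ⟨x, hz2⟩] at h
      have hd : dist a1 (⟨x, hz2⟩, (1:unitInterval)) = 1 - τf θ t (s:ℝ) := by
        rw [Prod.dist_eq, Subtype.dist_eq, Subtype.dist_eq, Real.dist_eq, dist_self]
        rw [max_eq_right (abs_nonneg _)]
        rw [show (((1:unitInterval)):ℝ) = 1 from rfl, abs_sub_comm,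
          abs_of_nonneg (by linarith [hτ01.2])]
      calc dist x1 (p : M) = dist (R a1) p := (Subtype.dist_eq (R a1) p).symm
        _ ≤ CRr * dist a1 (⟨x, hz2⟩, (1:unitInterval)) := h
        _ = CRr * (1 - τf θ t (s:ℝ)) := by rw [hd]
    have hdp2 : dist x2 (p : M) ≤ CRr * (1 - τf θ' t' (s':ℝ)) := by
      have h := hRlip.dist_le_mul a2 (⟨x', hw2⟩, 1)
      rw [hR1 ⟨x', hw2⟩] at h
      have hd : dist a2 (⟨x', hw2⟩, (1:unitInterval)) = 1 - τf θ' t' (s':ℝ) := by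
        rw [Prod.dist_eq, Subtype.dist_eq, Subtype.dist_eq, Real.dist_eq, dist_self]
        rw [max_eq_right (abs_nonneg _)]
        rw [show (((1:unitInterval)):ℝ) = 1 from rfl, abs_sub_comm,
          abs_of_nonneg (by linarith [hτ01'.2])]
      calc dist x2 (p : M) = dist (R a2) p := (Subtype.dist_eq (R a2) p).symm
        _ ≤ CRr * dist a2 (⟨x', hw2⟩, (1:unitInterval)) := h
        _ = CRr * (1 - τf θ' t' (s':ℝ)) := by rw [hd]
    have hβ2 : β ≤ CRr*(1 - τf θ t (s:ℝ)) + CRr*(1 - τf θ' t' (s':ℝ)) := by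
      calc β ≤ dist x1 x2 := min_le_right _ _
        _ ≤ dist x1 (p : M) + dist (p : M) x2 := dist_triangle _ _ _
        _ = dist x1 (p : M) + dist x2 (p : M) := by rw [dist_comm (p : M) x2]
        _ ≤ CRr*(1 - τf θ t (s:ℝ)) + CRr*(1 - τf θ' t' (s':ℝ)) := add_le_add hdp1 hdp2
    -- u1 facts
    have hu1a : L - t ≤ L - t1f θ t (s:ℝ) := by
      have h := ht1m.2
      have e : t1f θ t (s:ℝ) = t - (s:ℝ)*(2*L - t)*(gf θ t) := rfl
      linarith
    have hu1b : L - t1f θ t (s:ℝ) ≤ (L - t) + 4*L*((s:ℝ)*mf θ) := by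
      have h := mini_u1b (rfl : gf θ t = 1/(μf θ t) - 1) hμlo hμ1 h1μm ht0 htL s.2.1 hL hm0
      have e : t - t1f θ t (s:ℝ) = (s:ℝ)*(2*L - t)*(gf θ t) := by
        show t - (t - (s:ℝ)*(2*L - t)*(gf θ t)) = _
        ring
      linarith
    have hu1L : L - t1f θ t (s:ℝ) ≤ L := by linarith [ht1m.1]
    have hu1a' : L - t' ≤ L - t1f θ' t' (s':ℝ) := by
      have h := ht1m'.2
      linarith
    have hu1b' : L - t1f θ' t' (s':ℝ) ≤ (L - t') + 4*L*((s':ℝ)*mf θ') := by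
      have h := mini_u1b (rfl : gf θ' t' = 1/(μf θ' t') - 1) hμlo' hμ1' h1μm' ht0' htL'
        s'.2.1 hL hm0'
      have e : t' - t1f θ' t' (s':ℝ) = (s':ℝ)*(2*L - t')*(gf θ' t') := by
        show t' - (t' - (s':ℝ)*(2*L - t')*(gf θ' t')) = _
        ring
      linarith
    have hu1L' : L - t1f θ' t' (s':ℝ) ≤ L := by linarith [ht1m'.1]
    have hΔuE : |(L - t) - (L - t')| ≤ E := by
      rw [show (L - t) - (L - t') = -(t - t') by ring, abs_neg]
      exact hΔtE
    have hΔqE : |qf θ t (s:ℝ) - qf θ' t' (s':ℝ)| ≤ (2*L*(n:ℝ) + L + 1)*E :=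
      mini_dq hSE hΔmE hΔtE s.2.1 s.2.2 s'.2.1 s'.2.2 hm0 hm1 hm0' hm1'
        ht0 htL ht0' htL' hn1 hL hE0
    -- the Phi bound
    have hΦ := phi_bound (τ := τf θ t (s:ℝ)) (τ' := τf θ' t' (s':ℝ)) (β := β) (α := α)
      hL hCR0 hcM1 hn1 hE0
      (by linarith : (0:ℝ) ≤ L - t) (by ring : t = L - (L - t)) ht0
      (by linarith : (0:ℝ) ≤ L - t') (by ring : t' = L - (L - t')) ht0'
      s.2.1 s.2.2 s'.2.1 s'.2.2 hm0 hm1 hm0' hm1'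
      (rfl : qf θ t (s:ℝ) = (s:ℝ)*mf θ*t) (rfl : qf θ' t' (s':ℝ) = (s':ℝ)*mf θ'*t')
      (rfl : τf θ t (s:ℝ) = max 0 (min 1 (qf θ t (s:ℝ) / max (qf θ t (s:ℝ)) (L - t))))
      (rfl : τf θ' t' (s':ℝ) = max 0 (min 1 (qf θ' t' (s':ℝ) / max (qf θ' t' (s':ℝ)) (L - t'))))
      hu1a hu1b hu1L hu1a' hu1b' hu1L'
      hβ0 hα0 hβ1 hβ2 hWαE hΔuE hΔqE
    -- output decomposition
    have ht1L : t1f θ t (s:ℝ) ≤ L := le_trans ht1m.2 htL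
    have ht1L' : t1f θ' t' (s':ℝ) ≤ L := le_trans ht1m'.2 htL'
    have hcone_out : coneDist L (x1, t1f θ t (s:ℝ)) (x2, t1f θ' t' (s':ℝ)) ≤
        |t1f θ t (s:ℝ) - t1f θ' t' (s':ℝ)| +
          Real.sqrt ((L - t1f θ t (s:ℝ))*(L - t1f θ' t' (s':ℝ))) * β :=
      coneDist_le_add (c := (x1, t1f θ t (s:ℝ))) (c' := (x2, t1f θ' t' (s':ℝ))) ht1L ht1L'
    have hFeq : F ((θ,x,t), s) = (th1 θ t (s:ℝ), x1, t1f θ t (s:ℝ)) := by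
      show (th1 θ t (s:ℝ),
        (if h : x ∈ V then
          ((R (⟨x, h⟩, ⟨τf θ t (s:ℝ), hτmem _ _ _⟩) : V) : M) else x),
        t1f θ t (s:ℝ)) = _
      rw [dif_pos hz2]
    have hFeq' : F ((θ',x',t'), s') = (th1 θ' t' (s':ℝ), x2, t1f θ' t' (s':ℝ)) := by
      show (th1 θ' t' (s':ℝ),
        (if h : x' ∈ V then
          ((R (⟨x', h⟩, ⟨τf θ' t' (s':ℝ), hτmem _ _ _⟩) : V) : M) else x'),
        t1f θ' t' (s':ℝ)) = _
      rw [dif_pos hw2]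
    have hconst : (7 + 4*(n:ℝ)) + (2 + 2*L + 2*L*(4*(1+(n:ℝ))))
        + CRr*((1+4*L)*(cM+1)*(2*L*(n:ℝ)+L+2)^2*20) ≤ Kr := by
      rw [hKr]
      linarith
    calc prodConeDist L (F ((θ,x,t), s)) (F ((θ',x',t'), s'))
        = prodConeDist L (th1 θ t (s:ℝ), x1, t1f θ t (s:ℝ))
            (th1 θ' t' (s':ℝ), x2, t1f θ' t' (s':ℝ)) := by rw [hFeq, hFeq']
      _ ≤ dist (th1 θ t (s:ℝ)) (th1 θ' t' (s':ℝ)) +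
            coneDist L (x1, t1f θ t (s:ℝ)) (x2, t1f θ' t' (s':ℝ)) := prodConeDist_le_add
      _ ≤ (7 + 4*(n:ℝ))*E + ((2 + 2*L + 2*L*(4*(1+(n:ℝ))))*E
            + CRr*((1+4*L)*(cM+1)*(2*L*(n:ℝ)+L+2)^2*20)*E) := by
          have := le_trans hcone_out (add_le_add hdt1 hΦ)
          linarith [hdθout]
      _ ≤ Kr * E := by
          have h9 := mul_le_mul_of_nonneg_right hconst hE0
          linarith
      _ = (Real.toNNReal Kr : ℝ) * E := by rw [Real.coe_toNNReal _ hKr0]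

  · -- condition 3: F(z,0) = z
    rintro ⟨θ, x, t⟩ hz1 hz2 hz3
    have hcoe0 : ((0:unitInterval):ℝ) = 0 := rfl
    have hq0 : qf θ t ((0:unitInterval):ℝ) = 0 := by
      show ((0:unitInterval):ℝ) * mf θ * t = 0
      rw [hcoe0]; ring
    have hτ0 : τf θ t ((0:unitInterval):ℝ) = 0 := by
      show max 0 (min 1 (qf θ t ((0:unitInterval):ℝ) /
        max (qf θ t ((0:unitInterval):ℝ)) (L - t))) = 0
      rw [hq0, zero_div, min_eq_right (zero_le_one), max_self]
    have hFz : F ((θ, x, t), 0) = (θ, x, t) := by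
      have h1 : th1 θ t ((0:unitInterval):ℝ) = θ := by
        funext j
        show θ j + ((0:unitInterval):ℝ)*(θ j - b j)*(gf θ t) = θ j
        rw [hcoe0]; ring
      have h3 : t1f θ t ((0:unitInterval):ℝ) = t := by
        show t - ((0:unitInterval):ℝ)*(2*L - t)*(gf θ t) = t
        rw [hcoe0]; ring
      have h2 : (if h : x ∈ V then
          ((R (⟨x, h⟩, ⟨τf θ t ((0:unitInterval):ℝ), hτmem _ _ _⟩) : V) : M) else x) = x := by
        rw [dif_pos hz2]
        have hsub : (⟨τf θ t ((0:unitInterval):ℝ), hτmem θ t _⟩ : unitInterval) = 0 :=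
          Subtype.ext hτ0
        rw [hsub, hR0 ⟨x, hz2⟩]
      show (th1 θ t ((0:unitInterval):ℝ),
        (if h : x ∈ V then
          ((R (⟨x, h⟩, ⟨τf θ t ((0:unitInterval):ℝ), hτmem _ _ _⟩) : V) : M) else x),
        t1f θ t ((0:unitInterval):ℝ)) = (θ, x, t)
      rw [h1, h2, h3]
    rw [hFz]
    exact prodConeDist_self L (θ, x, t)
  · -- condition 4: retraction lands in base or boundary
    rintro ⟨θ, x, t⟩ hz1 hz2 hz3
    obtain ⟨_, _, hm0, hm1, hμlo, hμ1, hg0, hg1, h1μm, h1μt, hθ1⟩ :=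
      pack θ t hz1 hz3 1 zero_le_one le_rfl
    have hcoe1 : ((1:unitInterval):ℝ) = 1 := rfl
    rcases le_total (1 - mf θ) (1 - t/(2*L)) with hc | hc
    · left
      show t1f θ t ((1:unitInterval):ℝ) = 0
      have eμ : μf θ t = 1 - t/(2*L) := max_eq_left hc
      have hν : (0:ℝ) < 1 - t/(2*L) := by rw [← eμ]; linarith
      have eg : gf θ t = 1/(1 - t/(2*L)) - 1 := by
        show 1/(μf θ t) - 1 = _
        rw [eμ]
      show t - ((1:unitInterval):ℝ)*(2*L - t)*(gf θ t) = 0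
      rw [hcoe1, eg]
      have h2Lt : (2*L - t : ℝ) ≠ 0 := ne_of_gt (by linarith [hz3.2])
      have h2L : (2*L : ℝ) ≠ 0 := by positivity
      rw [show (1:ℝ) - t/(2*L) = (2*L - t)/(2*L) by field_simp, one_div_div]
      field_simp
      ring
    · right
      obtain ⟨j, hjσ, hjv⟩ := Finset.exists_mem_eq_inf' hne θ
      refine ⟨j, hjσ, ?_⟩
      show θ j + ((1:unitInterval):ℝ)*(θ j - b j)*(gf θ t) = 0
      have hbj : b j = (n:ℝ)⁻¹ := if_pos hjσ
      have eμ : μf θ t = 1 - mf θ := max_eq_right hc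
      have emf : mf θ = (n:ℝ) * θ j := by
        show (n:ℝ) * σ.inf' hne θ = _
        rw [← hjv]
      have hνpos : (0:ℝ) < 1 - (n:ℝ)*θ j := by
        rw [← emf, ← eμ]; linarith
      have eg : gf θ t = 1/(1 - (n:ℝ)*θ j) - 1 := by
        show 1/(μf θ t) - 1 = _
        rw [eμ, emf]
      rw [hcoe1, eg, hbj]
      field_simp
      have hν' : (1:ℝ) - θ j * n ≠ 0 := by rw [mul_comm]; exact ne_of_gt hνpos
      linear_combination -(mul_inv_cancel₀ hν')
  · -- condition 5: fixed points
    rintro ⟨θ, x, t⟩ hz1 hz2 hz3 hfix s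
    obtain ⟨_, _, hm0, hm1, hμlo, hμ1, hg0, hg1, h1μm, h1μt, hθ1⟩ :=
      pack θ t hz1 hz3 (s:ℝ) s.2.1 s.2.2
    have hinf0 : 0 ≤ σ.inf' hne θ := Finset.le_inf' hne θ (fun j _ => hz1.1 j)
    have hμq : μf θ t = 1 ∧ qf θ t (s:ℝ) = 0 := by
      rcases hfix with h0 | ⟨j, hjσ, hj0⟩
      · have ht00 : t = 0 := h0
        constructor
        · show max (1 - t/(2*L)) (1 - mf θ) = 1
          rw [ht00, zero_div, sub_zero]
          exact max_eq_left (by linarith)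
        · show (s:ℝ) * mf θ * t = 0
          rw [ht00]; ring
      · have hθj0 : θ j = 0 := hj0
        have hminf : σ.inf' hne θ = 0 :=
          le_antisymm (hθj0 ▸ Finset.inf'_le θ hjσ) hinf0
        have hm00 : mf θ = 0 := by
          show (n:ℝ) * σ.inf' hne θ = 0
          rw [hminf]; ring
        constructor
        · show max (1 - t/(2*L)) (1 - mf θ) = 1
          rw [hm00, sub_zero]
          have : (0:ℝ) ≤ t/(2*L) := div_nonneg hz3.1 (by linarith)
          exact max_eq_right (by linarith)
        · show (s:ℝ) * mf θ * t = 0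
          rw [hm00]; ring
    have hgz : gf θ t = 0 := by
      show 1/(μf θ t) - 1 = 0
      rw [hμq.1]; norm_num
    have hτ0 : τf θ t (s:ℝ) = 0 := by
      show max 0 (min 1 (qf θ t (s:ℝ) / max (qf θ t (s:ℝ)) (L - t))) = 0
      rw [hμq.2, zero_div, min_eq_right (zero_le_one), max_self]
    have hFz : F ((θ, x, t), s) = (θ, x, t) := by
      have h1 : th1 θ t ((s:unitInterval):ℝ) = θ := by
        funext j
        show θ j + (s:ℝ)*(θ j - b j)*(gf θ t) = θ j
        rw [hgz]; ring
      have h3 : t1f θ t (s:ℝ) = t := by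
        show t - (s:ℝ)*(2*L - t)*(gf θ t) = t
        rw [hgz]; ring
      have h2 : (if h : x ∈ V then
          ((R (⟨x, h⟩, ⟨τf θ t (s:ℝ), hτmem _ _ _⟩) : V) : M) else x) = x := by
        rw [dif_pos hz2]
        have hsub : (⟨τf θ t (s:ℝ), hτmem θ t _⟩ : unitInterval) = 0 :=
          Subtype.ext hτ0
        rw [hsub, hR0 ⟨x, hz2⟩]
      show (th1 θ t (s:ℝ),
        (if h : x ∈ V then
          ((R (⟨x, h⟩, ⟨τf θ t (s:ℝ), hτmem _ _ _⟩) : V) : M) else x),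
        t1f θ t (s:ℝ)) = (θ, x, t)
      rw [h1, h2, h3]
    rw [hFz]
    exact prodConeDist_self L (θ, x, t)
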